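/- Let N be even and let v : Fin N → Fin n → ℕ be any family of vectors. Call a block {i,j} of a pair partition an identical pair if v i = v j. Then there exists a pair partition P of Fin N such that P has minimum cost among all pair partitions, and simultaneously the number of identical pairs among the blocks of P equals the maximum, over all pair partitions of Fin N, of the number of identical pairs. -/

import Mathlib

open Finset

/-- Cost of a block `B`: sum of componentwise maxima of the vectors indexed by `B`. -/
def blockCost {N n : ℕ} (v : Fin N → Fin n → ℕ) (B : Finset (Fin N)) : ℕ :=
  ∑ j : Fin n, B.sup fun i => v i j

/-- Cost of a partition of `Fin N`: sum of the costs of its blocks. -/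
def partCost {N n : ℕ} (v : Fin N → Fin n → ℕ)
    (P : Finpartition (univ : Finset (Fin N))) : ℕ :=
  ∑ b ∈ P.parts, blockCost v b

/-- A pair partition: every block has size 2. -/
def IsPairPartition {N : ℕ} (P : Finpartition (univ : Finset (Fin N))) : Prop :=
  ∀ b ∈ P.parts, b.card = 2

open scoped Classical in
/-- The number of identical pairs of a pair partition: blocks all of whose elements
carry the same vector. -/
noncomputable def identicalPairs {N n : ℕ} (v : Fin N → Fin n → ℕ)
    (P : Finpartition (univ : Finset (Fin N))) : ℕ :=
  (P.parts.filter fun b => ∀ i ∈ b, ∀ j ∈ b, v i = v j).card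

def mkP {N : ℕ} (parts : Finset (Finset (Fin N)))
    (hdisj : (parts : Set (Finset (Fin N))).PairwiseDisjoint id)
    (hsup : parts.sup id = univ) (hbot : ∅ ∉ parts) :
    Finpartition (univ : Finset (Fin N)) :=
  ⟨parts, Finset.supIndep_iff_pairwiseDisjoint.mpr hdisj, hsup, hbot⟩

lemma blockCost_pair {N n : ℕ} (v : Fin N → Fin n → ℕ) (i j : Fin N) :
    blockCost v {i, j} = ∑ c : Fin n, max (v i c) (v j c) := by
  unfold blockCost
  congr 1; ext c
  simp [Finset.sup_insert, Finset.sup_singleton]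

lemma key_ineq {N n : ℕ} (v : Fin N → Fin n → ℕ) {i j a b : Fin N}
    (h : v i = v j) :
    blockCost v {i, j} + blockCost v {a, b} ≤ blockCost v {i, a} + blockCost v {j, b} := by
  rw [blockCost_pair, blockCost_pair, blockCost_pair, blockCost_pair,
    ← Finset.sum_add_distrib, ← Finset.sum_add_distrib]
  apply Finset.sum_le_sum
  intro c _
  have : v i c = v j c := by rw [h]
  rcases le_total (v a c) (v b c) with hab | hab <;>
  · simp only [max_def]; split_ifs <;> omega

lemma pair_eq {N : ℕ} {b : Finset (Fin N)} {i : Fin N} (hc : b.card = 2)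
    (hi : i ∈ b) : ∃ a, a ≠ i ∧ b = {i, a} := by
  obtain ⟨x, y, hxy, rfl⟩ := Finset.card_eq_two.mp hc
  simp only [Finset.mem_insert, Finset.mem_singleton] at hi
  rcases hi with rfl | rfl
  · exact ⟨y, fun h => hxy h.symm, rfl⟩
  · exact ⟨x, hxy, by rw [Finset.pair_comm]⟩

lemma exists_pairPartition (N : ℕ) (hN : Even N) :
    ∃ P : Finpartition (univ : Finset (Fin N)), IsPairPartition P := by
  obtain ⟨m, hm⟩ := hN
  have h1 : ∀ k : Fin m, 2 * (k : ℕ) < N := by intro k; have := k.2; omega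
  have h2 : ∀ k : Fin m, 2 * (k : ℕ) + 1 < N := by intro k; have := k.2; omega
  set blk : Fin m → Finset (Fin N) :=
    fun k => {⟨2 * k, h1 k⟩, ⟨2 * k + 1, h2 k⟩} with hblk
  have hmem : ∀ (k : Fin m) (x : Fin N), x ∈ blk k ↔ (x : ℕ) = 2 * k ∨ (x : ℕ) = 2 * k + 1 := by
    intro k x
    simp only [hblk, Finset.mem_insert, Finset.mem_singleton, Fin.ext_iff]
  refine ⟨mkP ((univ : Finset (Fin m)).image blk) ?_ ?_ ?_, ?_⟩
  · intro s hs t ht hst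
    simp only [coe_image, Set.mem_image] at hs ht
    obtain ⟨k, -, rfl⟩ := hs
    obtain ⟨k', -, rfl⟩ := ht
    intro u hus hut x hx
    have h1 := hus hx
    have h2 := hut hx
    rw [id] at h1 h2
    rw [hmem] at h1 h2
    exfalso
    have : k ≠ k' := fun h => hst (by rw [h])
    have : (k : ℕ) ≠ k' := fun h => this (Fin.ext h)
    omega
  · apply Finset.eq_univ_of_forall
    intro x
    rw [Finset.mem_sup]
    have hx2 : (x : ℕ) / 2 < m := by have := x.2; omega
    refine ⟨blk ⟨(x : ℕ) / 2, hx2⟩, Finset.mem_image_of_mem _ (mem_univ _), ?_⟩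
    rw [id, hmem]
    simp only []
    omega
  · intro h
    simp only [Finset.mem_image] at h
    obtain ⟨k, -, hk⟩ := h
    have : (⟨2 * k, h1 k⟩ : Fin N) ∈ blk k := by rw [hmem]; left; rfl
    rw [hk] at this; exact absurd this (Finset.notMem_empty _)
  · intro b hb
    simp only [mkP, Finset.mem_image] at hb
    obtain ⟨k, -, rfl⟩ := hb
    rw [Finset.card_insert_of_notMem, Finset.card_singleton]
    simp only [Finset.mem_singleton, Fin.ext_iff]
    omega

open scoped Classical in
lemma swap_lemma {N n : ℕ} (v : Fin N → Fin n → ℕ)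
    (P : Finpartition (univ : Finset (Fin N))) (hP : IsPairPartition P)
    {i j : Fin N} (hij : v i = v j)
    {B1 B2 : Finset (Fin N)} (hB1 : B1 ∈ P.parts) (hB2 : B2 ∈ P.parts) (hBne : B1 ≠ B2)
    (hiB1 : i ∈ B1) (hjB2 : j ∈ B2)
    (hnid1 : ¬ ∀ x ∈ B1, ∀ y ∈ B1, v x = v y)
    (hnid2 : ¬ ∀ x ∈ B2, ∀ y ∈ B2, v x = v y) :
    ∃ P' : Finpartition (univ : Finset (Fin N)), IsPairPartition P' ∧
      partCost v P' ≤ partCost v P ∧ identicalPairs v P + 1 ≤ identicalPairs v P' := by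
  obtain ⟨a, hai, hB1e⟩ := pair_eq (hP B1 hB1) hiB1
  obtain ⟨b, hbj, hB2e⟩ := pair_eq (hP B2 hB2) hjB2
  have hdisj12 : Disjoint B1 B2 := P.disjoint hB1 hB2 hBne
  have haB1 : a ∈ B1 := by rw [hB1e]; simp
  have hbB2 : b ∈ B2 := by rw [hB2e]; simp
  -- all four distinct
  have hij' : i ≠ j := fun h => Finset.disjoint_left.mp hdisj12 hiB1 (h ▸ hjB2)
  have hib : i ≠ b := fun h => Finset.disjoint_left.mp hdisj12 hiB1 (h ▸ hbB2)
  have haj : a ≠ j := fun h => Finset.disjoint_left.mp hdisj12 haB1 (h ▸ hjB2)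
  have hab : a ≠ b := fun h => Finset.disjoint_left.mp hdisj12 haB1 (h ▸ hbB2)
  set rest := (P.parts.erase B1).erase B2 with hrest
  have hrest_sub : rest ⊆ P.parts := (Finset.erase_subset _ _).trans (Finset.erase_subset _ _)
  have hrest_disj : ∀ C ∈ rest, Disjoint C B1 ∧ Disjoint C B2 := by
    intro C hC
    have hC1 : C ≠ B1 := by
      intro h; exact (Finset.mem_erase.mp (Finset.mem_of_mem_erase hC)).1 h
    have hC2 : C ≠ B2 := (Finset.mem_erase.mp hC).1
    exact ⟨P.disjoint (hrest_sub hC) hB1 hC1, P.disjoint (hrest_sub hC) hB2 hC2⟩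
  have hnotmem : ∀ C ∈ rest, i ∉ C ∧ j ∉ C ∧ a ∉ C ∧ b ∉ C := by
    intro C hC
    obtain ⟨h1, h2⟩ := hrest_disj C hC
    exact ⟨fun h => Finset.disjoint_left.mp h1 h hiB1,
           fun h => Finset.disjoint_left.mp h2 h hjB2,
           fun h => Finset.disjoint_left.mp h1 h haB1,
           fun h => Finset.disjoint_left.mp h2 h hbB2⟩
  set newparts := insert ({i, j} : Finset (Fin N)) (insert {a, b} rest) with hnew
  have hij_ne_ab : ({i, j} : Finset (Fin N)) ≠ {a, b} := by
    intro h
    have : i ∈ ({a, b} : Finset (Fin N)) := h ▸ (by simp : i ∈ ({i,j} : Finset (Fin N)))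
    simp only [Finset.mem_insert, Finset.mem_singleton] at this
    rcases this with h | h
    · exact hai h.symm
    · exact hib h
  have hij_notin : ({i, j} : Finset (Fin N)) ∉ insert ({a, b} : Finset (Fin N)) rest := by
    simp only [Finset.mem_insert]
    rintro (h | h)
    · exact hij_ne_ab h
    · exact (hnotmem _ h).1 (by simp)
  have hab_notin : ({a, b} : Finset (Fin N)) ∉ rest := by
    intro h
    exact (hnotmem _ h).2.2.1 (by simp)
  have hPparts : P.parts = insert B1 (insert B2 rest) := by
    rw [hrest, Finset.insert_erase, Finset.insert_erase hB1]
    exact Finset.mem_erase.mpr ⟨fun h => hBne h.symm, hB2⟩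
  have hB1_notin : B1 ∉ insert B2 rest := by
    simp only [Finset.mem_insert]
    rintro (h | h)
    · exact hBne h
    · exact (Finset.mem_erase.mp (Finset.mem_of_mem_erase h)).1 rfl
  have hB2_notin : B2 ∉ rest := fun h => (Finset.mem_erase.mp h).1 rfl
  -- disjointness of new parts
  have Dij_ab : Disjoint ({i, j} : Finset (Fin N)) {a, b} := by
    rw [Finset.disjoint_left]
    intro x hx hx'
    simp only [Finset.mem_insert, Finset.mem_singleton] at hx hx'
    rcases hx with rfl | rfl <;> rcases hx' with h | h
    · exact hai h.symm
    · exact hib h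
    · exact haj h.symm
    · exact hbj h.symm
  have Dij_rest : ∀ C ∈ rest, Disjoint ({i, j} : Finset (Fin N)) C := by
    intro C hC
    rw [Finset.disjoint_left]
    intro x hx hx'
    simp only [Finset.mem_insert, Finset.mem_singleton] at hx
    rcases hx with rfl | rfl
    · exact (hnotmem C hC).1 hx'
    · exact (hnotmem C hC).2.1 hx'
  have Dab_rest : ∀ C ∈ rest, Disjoint ({a, b} : Finset (Fin N)) C := by
    intro C hC
    rw [Finset.disjoint_left]
    intro x hx hx'
    simp only [Finset.mem_insert, Finset.mem_singleton] at hx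
    rcases hx with rfl | rfl
    · exact (hnotmem C hC).2.2.1 hx'
    · exact (hnotmem C hC).2.2.2 hx'
  have hdisj' : (newparts : Set (Finset (Fin N))).PairwiseDisjoint id := by
    intro s hs t ht hst
    simp only [hnew, Finset.coe_insert, Set.mem_insert_iff, Finset.mem_coe] at hs ht
    rcases hs with rfl | rfl | hs <;> rcases ht with rfl | rfl | ht
    · exact absurd rfl hst
    · exact Dij_ab
    · exact Dij_rest _ ht
    · exact Dij_ab.symm
    · exact absurd rfl hst
    · exact Dab_rest _ ht
    · exact (Dij_rest _ hs).symm
    · exact (Dab_rest _ hs).symm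
    · exact P.disjoint (hrest_sub hs) (hrest_sub ht) hst
  have hsupeq : ({i, j} : Finset (Fin N)) ∪ {a, b} = B1 ∪ B2 := by
    rw [hB1e, hB2e]
    ext x
    simp only [Finset.mem_union, Finset.mem_insert, Finset.mem_singleton]
    tauto
  have hsup' : newparts.sup id = univ := by
    have h1 : P.parts.sup id = univ := P.sup_parts
    rw [hPparts, Finset.sup_insert, Finset.sup_insert] at h1
    rw [hnew, Finset.sup_insert, Finset.sup_insert]
    simp only [id] at h1 ⊢
    rw [← sup_assoc] at h1 ⊢
    rw [show ({i,j} : Finset (Fin N)) ⊔ {a,b} = B1 ⊔ B2 from hsupeq]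
    exact h1
  have hbot' : ∅ ∉ newparts := by
    simp only [hnew, Finset.mem_insert]
    rintro (h | h | h)
    · exact (Finset.insert_nonempty _ _).ne_empty h.symm
    · exact (Finset.insert_nonempty _ _).ne_empty h.symm
    · exact P.bot_notMem (hrest_sub h)
  refine ⟨mkP newparts hdisj' hsup' hbot', ?_, ?_, ?_⟩
  · intro c hc
    simp only [mkP, hnew, Finset.mem_insert] at hc
    rcases hc with rfl | rfl | hc
    · rw [Finset.card_insert_of_notMem (by simpa using hij'), Finset.card_singleton]
    · rw [Finset.card_insert_of_notMem (by simpa using hab), Finset.card_singleton]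
    · exact hP _ (hrest_sub hc)
  · unfold partCost
    show ∑ c ∈ newparts, blockCost v c ≤ _
    rw [hnew, Finset.sum_insert hij_notin, Finset.sum_insert hab_notin,
      hPparts, Finset.sum_insert hB1_notin, Finset.sum_insert hB2_notin]
    have := key_ineq (a := a) (b := b) v hij
    rw [← hB1e, ← hB2e] at this
    omega
  · classical
    unfold identicalPairs
    show _ + 1 ≤ (Finset.filter _ newparts).card
    have hIdij : ∀ x ∈ ({i, j} : Finset (Fin N)), ∀ y ∈ ({i, j} : Finset (Fin N)), v x = v y := by
      intro x hx y hy
      simp only [Finset.mem_insert, Finset.mem_singleton] at hx hy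
      rcases hx with rfl | rfl <;> rcases hy with rfl | rfl <;>
        first | rfl | exact hij | exact hij.symm
    have hfP : (P.parts.filter fun c => ∀ x ∈ c, ∀ y ∈ c, v x = v y)
        = rest.filter fun c => ∀ x ∈ c, ∀ y ∈ c, v x = v y := by
      rw [hPparts, Finset.filter_insert, Finset.filter_insert, if_neg hnid1, if_neg hnid2]
    rw [hfP, hnew, Finset.filter_insert, if_pos hIdij,
      Finset.card_insert_of_notMem (fun h => hij_notin (Finset.mem_of_mem_filter _ h))]
    have : (rest.filter fun c => ∀ x ∈ c, ∀ y ∈ c, v x = v y).card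
        ≤ ((insert ({a,b} : Finset (Fin N)) rest).filter fun c => ∀ x ∈ c, ∀ y ∈ c, v x = v y).card := by
      apply Finset.card_le_card
      apply Finset.filter_subset_filter
      exact Finset.subset_insert _ _
    omega

open scoped Classical in
noncomputable def maxIdent {N n : ℕ} (v : Fin N → Fin n → ℕ) : ℕ :=
  ∑ w ∈ (univ : Finset (Fin N)).image v, ((univ : Finset (Fin N)).filter fun i => v i = w).card / 2

open scoped Classical in
noncomputable def gval {N n : ℕ} (v : Fin N → Fin n → ℕ) (b : Finset (Fin N)) : Fin n → ℕ :=
  if h : b.Nonempty then v (b.min' h) else fun _ => 0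

open scoped Classical in
lemma fiber_facts {N n : ℕ} (v : Fin N → Fin n → ℕ)
    (P : Finpartition (univ : Finset (Fin N))) (hP : IsPairPartition P) :
    ∃ (t : (Fin n → ℕ) → ℕ) (C : (Fin n → ℕ) → Finset (Fin N)),
      identicalPairs v P = ∑ w ∈ (univ : Finset (Fin N)).image v, t w ∧
      (∀ w, C w ⊆ (univ : Finset (Fin N)).filter fun i => v i = w) ∧
      (∀ w, (C w).card = 2 * t w) ∧
      (∀ w i, v i = w →
        (∀ x ∈ P.part i, ∀ y ∈ P.part i, v x = v y) → i ∈ C w) := by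
  set F := P.parts.filter fun b => ∀ x ∈ b, ∀ y ∈ b, v x = v y with hF
  set t : (Fin n → ℕ) → ℕ := fun w => (F.filter fun b => gval v b = w).card with ht
  set C : (Fin n → ℕ) → Finset (Fin N) :=
    fun w => (F.filter fun b => gval v b = w).biUnion id with hC
  have hval : ∀ b ∈ F, ∀ x ∈ b, v x = gval v b := by
    intro b hb x hx
    rw [hF, Finset.mem_filter] at hb
    have hne : b.Nonempty := P.nonempty_of_mem_parts hb.1
    rw [gval, dif_pos hne]
    exact hb.2 x hx _ (b.min'_mem hne)
  refine ⟨t, C, ?_, ?_, ?_, ?_⟩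
  · unfold identicalPairs
    rw [← hF]
    apply Finset.card_eq_sum_card_fiberwise
    intro b hb
    have hne : b.Nonempty := P.nonempty_of_mem_parts (Finset.mem_filter.mp hb).1
    rw [Finset.mem_coe, Finset.mem_image]
    refine ⟨b.min' hne, mem_univ _, ?_⟩
    rw [gval, dif_pos hne]
  · intro w x hx
    rw [hC, Finset.mem_biUnion] at hx
    obtain ⟨b, hb, hxb⟩ := hx
    rw [Finset.mem_filter]
    refine ⟨mem_univ _, ?_⟩
    rw [hval b (Finset.mem_of_mem_filter _ hb) x hxb]
    exact (Finset.mem_filter.mp hb).2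
  · intro w
    set Fw := F.filter fun b => gval v b = w with hFw
    have hdisj : ∀ b ∈ Fw, ∀ c ∈ Fw, b ≠ c → Disjoint (id b) (id c) := by
      intro b hb c hc hbc
      exact P.disjoint (Finset.mem_of_mem_filter _ (Finset.mem_of_mem_filter _ hb))
        (Finset.mem_of_mem_filter _ (Finset.mem_of_mem_filter _ hc)) hbc
    have hcard : (Fw.biUnion id).card = ∑ b ∈ Fw, b.card := by
      rw [Finset.card_biUnion hdisj]; rfl
    have hsum : ∑ b ∈ Fw, b.card = 2 * Fw.card := by
      rw [Finset.sum_congr rfl fun b hb =>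
        hP b (Finset.mem_of_mem_filter _ (Finset.mem_of_mem_filter _ hb))]
      rw [Finset.sum_const, smul_eq_mul, mul_comm]
    rw [hC]
    rw [hcard, hsum]
  · intro w i hvi hid
    have hiu : i ∈ (univ : Finset (Fin N)) := mem_univ i
    have hbP : P.part i ∈ P.parts := P.part_mem.2 hiu
    have hib : i ∈ P.part i := P.mem_part hiu
    have hbF : P.part i ∈ F := Finset.mem_filter.mpr ⟨hbP, hid⟩
    have hne : (P.part i).Nonempty := ⟨i, hib⟩
    have hg : gval v (P.part i) = w := by
      rw [← hval _ hbF i hib, hvi]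
    rw [hC, Finset.mem_biUnion]
    exact ⟨P.part i, Finset.mem_filter.mpr ⟨hbF, hg⟩, hib⟩

open scoped Classical in
lemma bound_lemma {N n : ℕ} (v : Fin N → Fin n → ℕ)
    (P : Finpartition (univ : Finset (Fin N))) (hP : IsPairPartition P) :
    identicalPairs v P ≤ maxIdent v := by
  obtain ⟨t, C, hsum, hsub, hcard, -⟩ := fiber_facts v P hP
  rw [hsum, maxIdent]
  apply Finset.sum_le_sum
  intro w _
  have h1 : 2 * t w ≤ ((univ : Finset (Fin N)).filter fun i => v i = w).card := by
    rw [← hcard w]; exact Finset.card_le_card (hsub w)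
  omega

open scoped Classical in
lemma improve_lemma {N n : ℕ} (v : Fin N → Fin n → ℕ)
    (P : Finpartition (univ : Finset (Fin N))) (hP : IsPairPartition P)
    (hlt : identicalPairs v P < maxIdent v) :
    ∃ P' : Finpartition (univ : Finset (Fin N)), IsPairPartition P' ∧
      partCost v P' ≤ partCost v P ∧ identicalPairs v P + 1 ≤ identicalPairs v P' := by
  obtain ⟨t, C, hsum, hsub, hcard, hcov⟩ := fiber_facts v P hP
  rw [hsum, maxIdent] at hlt
  have hex : ∃ w ∈ (univ : Finset (Fin N)).image v,
      t w < ((univ : Finset (Fin N)).filter fun i => v i = w).card / 2 := by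
    by_contra h
    push_neg at h
    exact absurd (Finset.sum_le_sum h) (not_le.mpr hlt)
  obtain ⟨w, -, hw⟩ := hex
  set cls := (univ : Finset (Fin N)).filter fun i => v i = w with hcls
  have hfe : cls.card = ((univ : Finset (Fin N)).filter fun i => v i = w).card := rfl
  have h2 : 2 * t w + 2 ≤ cls.card := by
    have := Nat.div_mul_le_self cls.card 2
    omega
  set U := cls \ C w with hU
  have hUcard : 2 ≤ U.card := by
    rw [hU, Finset.card_sdiff_of_subset (hsub w), hcard w]
    omega
  obtain ⟨i, hi, j, hj, hijne⟩ := Finset.one_lt_card.mp (by omega : 1 < U.card)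
  rw [hU, Finset.mem_sdiff, hcls, Finset.mem_filter] at hi hj
  have hvi : v i = w := hi.1.2
  have hvj : v j = w := hj.1.2
  have hij : v i = v j := by rw [hvi, hvj]
  have hnid1 : ¬ ∀ x ∈ P.part i, ∀ y ∈ P.part i, v x = v y :=
    fun h => hi.2 (hcov w i hvi h)
  have hnid2 : ¬ ∀ x ∈ P.part j, ∀ y ∈ P.part j, v x = v y :=
    fun h => hj.2 (hcov w j hvj h)
  have hiu : i ∈ (univ : Finset (Fin N)) := mem_univ i
  have hju : j ∈ (univ : Finset (Fin N)) := mem_univ j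
  have hBne : P.part i ≠ P.part j := by
    intro h
    apply hnid1
    have hjin : j ∈ P.part i := h ▸ P.mem_part hju
    have hiin : i ∈ P.part i := P.mem_part hiu
    have hsubp : ({i, j} : Finset (Fin N)) ⊆ P.part i := by
      intro x hx
      simp only [Finset.mem_insert, Finset.mem_singleton] at hx
      rcases hx with rfl | rfl
      · exact hiin
      · exact hjin
    have heq : P.part i = {i, j} := by
      apply (Finset.eq_of_subset_of_card_le hsubp ?_).symm
      rw [hP _ (P.part_mem.2 hiu), Finset.card_insert_of_notMem (by simpa using hijne),
        Finset.card_singleton]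
    rw [heq]
    intro x hx y hy
    simp only [Finset.mem_insert, Finset.mem_singleton] at hx hy
    rcases hx with rfl | rfl <;> rcases hy with rfl | rfl <;>
      first | rfl | exact hij | exact hij.symm
  exact swap_lemma v P hP hij (P.part_mem.2 hiu) (P.part_mem.2 hju) hBne
    (P.mem_part hiu) (P.mem_part hju) hnid1 hnid2

/-- Among the minimum-cost pair partitions, there is one containing a maximum number
of identical pairs. -/
theorem exists_min_cost_max_identical (N n : ℕ) (hN : Even N)
    (v : Fin N → Fin n → ℕ) :
    ∃ P : Finpartition (univ : Finset (Fin N)), IsPairPartition P ∧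
      (∀ P' : Finpartition (univ : Finset (Fin N)),
        IsPairPartition P' → partCost v P ≤ partCost v P') ∧
      (∀ P' : Finpartition (univ : Finset (Fin N)),
        IsPairPartition P' → identicalPairs v P' ≤ identicalPairs v P) := by
  obtain ⟨P0, hP0⟩ := exists_pairPartition N hN
  set S : Set ℕ := {c | ∃ P : Finpartition (univ : Finset (Fin N)),
    IsPairPartition P ∧ partCost v P = c} with hSdef
  have hS : S.Nonempty := ⟨partCost v P0, P0, hP0, rfl⟩
  obtain ⟨P1, hP1, hc1⟩ := Nat.sInf_mem hS
  set T : Set ℕ := {k | ∃ P : Finpartition (univ : Finset (Fin N)),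
    IsPairPartition P ∧ partCost v P = sInf S ∧ identicalPairs v P = k} with hTdef
  have hT : T.Nonempty := ⟨identicalPairs v P1, P1, hP1, hc1, rfl⟩
  have hTb : BddAbove T := by
    refine ⟨maxIdent v, ?_⟩
    rintro k ⟨P, hp, -, hk⟩
    exact hk ▸ bound_lemma v P hp
  obtain ⟨P, hPp, hPc, hPi⟩ := Nat.sSup_mem hT hTb
  refine ⟨P, hPp, ?_, ?_⟩
  · intro P' h'
    rw [hPc]
    exact Nat.sInf_le ⟨P', h', rfl⟩
  · intro P' h'
    have hmax : maxIdent v ≤ identicalPairs v P := by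
      by_contra h
      push_neg at h
      obtain ⟨Q, hQp, hQc, hQi⟩ := improve_lemma v P hPp h
      have h1 : sInf S ≤ partCost v Q := Nat.sInf_le ⟨Q, hQp, rfl⟩
      have h2 : partCost v Q = sInf S := le_antisymm (hPc ▸ hQc) h1
      have h3 : identicalPairs v Q ≤ sSup T := le_csSup hTb ⟨Q, hQp, h2, rfl⟩
      omega
    exact (bound_lemma v P' h').trans hmax
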